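/- Let f(k·1) = c/k for a constant c > 0 (so f is non-increasing along the diagonal). If n complete tuples arrive and are matched sequentially from a pool of all n tuples, the total matching cost is Σ_{k=1}^n c/k = c·H_n; if instead each tuple is matched immediately upon arrival (pool size 1 each time), the total matching cost is n·c. Therefore the ratio (n·c)/(c·H_n) = n/H_n is unbounded in n. -/

import Mathlib

open Filter

/-- The `n`-th harmonic number. -/
noncomputable def harmonic' (n : ℕ) : ℝ := ∑ k ∈ Finset.Icc 1 n, (1 : ℝ) / k

lemma harmonic'_eq (n : ℕ) : harmonic' n = (harmonic n : ℝ) := by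
  rw [harmonic', harmonic_eq_sum_Icc]
  push_cast
  simp [one_div]

lemma harmonic'_pos {n : ℕ} (hn : n ≠ 0) : 0 < harmonic' n := by
  rw [harmonic'_eq]
  exact_mod_cast harmonic_pos hn

lemma tendsto_div_log : Tendsto (fun n : ℕ => (n : ℝ) / (1 + Real.log n)) atTop atTop := by
  have h0 : Tendsto (fun n : ℕ => (1 + Real.log n) / (n : ℝ)) atTop (nhds 0) := by
    have h1 : Tendsto (fun n : ℕ => 1 / (n : ℝ)) atTop (nhds 0) :=
      tendsto_one_div_atTop_nhds_zero_nat
    have h2 : Tendsto (fun n : ℕ => Real.log n / (n : ℝ)) atTop (nhds 0) := by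
      have := Real.isLittleO_log_id_atTop.tendsto_div_nhds_zero
      exact this.comp tendsto_natCast_atTop_atTop
    have := h1.add h2
    simpa [add_div] using this
  have h0' : Tendsto (fun n : ℕ => (1 + Real.log n) / (n : ℝ)) atTop (nhdsWithin 0 (Set.Ioi 0)) := by
    refine tendsto_nhdsWithin_of_tendsto_nhds_of_eventually_within _ h0 ?_
    filter_upwards [eventually_ge_atTop 1] with n hn
    have hn1 : (1 : ℝ) ≤ (n : ℝ) := by exact_mod_cast hn
    have hlog : 0 ≤ Real.log n := Real.log_nonneg hn1
    simp only [Set.mem_Ioi]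
    exact div_pos (by linarith) (by linarith)
  have := h0'.inv_tendsto_nhdsGT_zero
  refine this.congr' ?_
  filter_upwards [eventually_ge_atTop 1] with n hn
  simp [inv_div]

lemma tendsto_ratio : Tendsto (fun n : ℕ => (n : ℝ) / harmonic' n) atTop atTop := by
  refine tendsto_atTop_mono' atTop ?_ tendsto_div_log
  filter_upwards [eventually_ge_atTop 1] with n hn
  have hn0 : n ≠ 0 := by omega
  have hpos : 0 < harmonic' n := harmonic'_pos hn0
  have hle : harmonic' n ≤ 1 + Real.log n := by
    rw [harmonic'_eq]; exact harmonic_le_one_add_log n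
  exact div_le_div_of_nonneg_left (by positivity) hpos hle

/-- With diagonal matching cost `f(k·1) = c/k`, matching sequentially
from a full pool of `n` tuples costs `Σ_{k=1}^n c/k = c·H_n`, matching each tuple
immediately costs `n·c`, and the ratio `n/H_n` is unbounded in `n`. -/
theorem stmt_13 :
    (∀ c : ℝ, 0 < c → ∀ n : ℕ,
      (∑ k ∈ Finset.Icc 1 n, c / (k : ℝ)) = c * harmonic' n ∧
      (∑ _k ∈ Finset.Icc 1 n, c) = (n : ℝ) * c ∧
      ((n : ℝ) * c) / (c * harmonic' n) = (n : ℝ) / harmonic' n) ∧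
    Tendsto (fun n : ℕ => (n : ℝ) / harmonic' n) atTop atTop := by
  refine ⟨fun c hc n => ⟨?_, ?_, ?_⟩, tendsto_ratio⟩
  · rw [harmonic', Finset.mul_sum]
    refine Finset.sum_congr rfl fun k _ => ?_
    ring
  · simp [Nat.card_Icc, mul_comm]
  · rw [mul_comm (n : ℝ) c, mul_div_mul_left _ _ (ne_of_gt hc)]
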